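/- L¹ decay of frequency-localized heat kernels (key estimate in the proof of Lemma 3.5): Let n ≥ 1 and let φ : ℝⁿ → ℝ be a smooth compactly supported function whose support does not contain the origin (e.g. supp φ ⊆ {ξ : R₁ ≤ |ξ| ≤ R₂} for some 0 < R₁ < R₂). Then there exist constants c, C > 0, depending only on n and φ, such that for all t > 0 and all λ > 0, the function G_{λ,t}(x) := ∫_{ℝⁿ} e^{2πi x·ξ} φ(ξ/λ) e^{−t|ξ|²} dξ satisfies ∫_{ℝⁿ} |G_{λ,t}(x)| dx ≤ C e^{−c t λ²}. -/

import Mathlib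

set_option maxHeartbeats 1000000
set_option synthInstance.maxHeartbeats 400000


open MeasureTheory Metric Set ENNReal

lemma aux_pow_le_exp {x : ℝ} (hx : 0 ≤ x) (N : ℕ) : x ^ N ≤ N.factorial * Real.exp x := by
  have h1 : x ^ N / (N.factorial : ℝ) ≤ ∑ i ∈ Finset.range (N + 1), x ^ i / (i.factorial : ℝ) :=
    Finset.single_le_sum (f := fun i => x ^ i / (i.factorial : ℝ))
      (fun i _ => by positivity) (by simp)
  have h2 := Real.sum_le_exp_of_nonneg hx (N + 1)
  have h3 : (0:ℝ) < N.factorial := by positivity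
  have := h1.trans h2
  rw [div_le_iff₀ h3] at this
  linarith

lemma aux_poly_exp (N : ℕ) {a : ℝ} (ha : 0 < a) :
    ∃ C : ℝ, 0 < C ∧ ∀ s : ℝ, 0 ≤ s → (1 + s) ^ N * Real.exp (-(a * s)) ≤ C := by
  refine ⟨(1 + 1/a) ^ N * 2 ^ N * (1 + N.factorial), by positivity, fun s hs => ?_⟩
  set x := a * s with hx
  have hx0 : 0 ≤ x := by positivity
  have h1 : (1 + s) ≤ (1 + 1/a) * (1 + x) := by
    have hax : (1/a) * x = s := by rw [hx]; field_simp
    have hexp : (1+1/a)*(1+x) = 1 + x + 1/a + s := by rw [← hax]; ring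
    have h1a : (0:ℝ) < 1/a := by positivity
    linarith
  have h2 : (1 + s) ^ N ≤ (1 + 1/a) ^ N * (1 + x) ^ N := by
    rw [← mul_pow]; exact pow_le_pow_left₀ (by positivity) h1 N
  have h3 : (1 + x) ^ N ≤ 2 ^ N * (1 + x ^ N) := by
    have hmax : (1 + x) ≤ 2 * max 1 x := by
      have := le_max_left 1 x; have := le_max_right 1 x; linarith
    have h4 : (1 + x) ^ N ≤ (2 * max 1 x) ^ N := pow_le_pow_left₀ (by positivity) hmax N
    have h5 : (max 1 x) ^ N ≤ 1 + x ^ N := by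
      rcases max_cases 1 x with ⟨h, _⟩ | ⟨h, _⟩ <;> rw [h]
      · simp; positivity
      · nlinarith [pow_nonneg hx0 N]
    calc (1 + x) ^ N ≤ (2 * max 1 x) ^ N := h4
      _ = 2 ^ N * (max 1 x) ^ N := mul_pow _ _ _
      _ ≤ 2 ^ N * (1 + x ^ N) := by
          exact mul_le_mul_of_nonneg_left h5 (by positivity)
  have h6 : (1 + x ^ N) * Real.exp (-x) ≤ 1 + N.factorial := by
    have he : Real.exp (-x) ≤ 1 := Real.exp_le_one_iff.mpr (by linarith)
    have h7 : x ^ N * Real.exp (-x) ≤ N.factorial := by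
      have := aux_pow_le_exp hx0 N
      have h8 : Real.exp x * Real.exp (-x) = 1 := by
        rw [← Real.exp_add]; simp
      nlinarith [Real.exp_pos (-x), Real.exp_pos x]
    nlinarith [Real.exp_pos (-x), pow_nonneg hx0 N]
  have hexp : Real.exp (-(a*s)) = Real.exp (-x) := rfl
  rw [hexp]
  have e1 : (0:ℝ) ≤ Real.exp (-x) := (Real.exp_pos _).le
  calc (1+s)^N * Real.exp (-x) ≤ ((1+1/a)^N * (2^N * (1 + x^N))) * Real.exp (-x) := by
        apply mul_le_mul_of_nonneg_right _ e1
        calc (1+s)^N ≤ (1+1/a)^N * (1+x)^N := h2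
          _ ≤ (1+1/a)^N * (2^N * (1+x^N)) :=
              mul_le_mul_of_nonneg_left h3 (by positivity)
    _ = (1+1/a)^N * 2^N * ((1 + x^N) * Real.exp (-x)) := by ring
    _ ≤ (1+1/a)^N * 2^N * (1 + N.factorial) := by
        exact mul_le_mul_of_nonneg_left h6 (by positivity)




lemma aux_one_add_pow {x : ℝ} (hx : 0 ≤ x) (N : ℕ) : (1 + x) ^ N ≤ 2 ^ N * (1 + x ^ N) := by
  have hmax : (1 + x) ≤ 2 * max 1 x := by
    have := le_max_left 1 x; have := le_max_right 1 x; linarith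
  have h4 : (1 + x) ^ N ≤ (2 * max 1 x) ^ N := pow_le_pow_left₀ (by positivity) hmax N
  have h5 : (max 1 x) ^ N ≤ 1 + x ^ N := by
    rcases max_cases 1 x with ⟨h, _⟩ | ⟨h, _⟩ <;> rw [h]
    · simp; positivity
    · nlinarith [pow_nonneg hx N]
  calc (1 + x) ^ N ≤ (2 * max 1 x) ^ N := h4
    _ = 2 ^ N * (max 1 x) ^ N := mul_pow _ _ _
    _ ≤ 2 ^ N * (1 + x ^ N) := mul_le_mul_of_nonneg_left h5 (by positivity)

variable {E : Type*} [NormedAddCommGroup E] [InnerProductSpace ℝ E]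

lemma aux_gauss_deriv (m : ℕ) {s : ℝ} (hs : 0 ≤ s) (η : E) :
    ‖iteratedFDeriv ℝ m (fun y : E => Real.exp (-(s * ‖y‖ ^ 2))) η‖ ≤
      (m.factorial : ℝ) * Real.exp (-(s * ‖η‖ ^ 2)) * (1 + 2 * s * (‖η‖ + 1)) ^ m := by
  classical
  set q : E → ℝ := fun y => -(s * ‖y‖ ^ 2) with hq
  have hbd : ∀ y : E, ‖(-(2 * s)) • innerSL ℝ y‖ ≤ (2 * s) * ‖y‖ := by
    intro y
    have h := norm_smul (α := ℝ) (β := E →L[ℝ] ℝ) (-(2*s)) (innerSL ℝ y)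
    rw [h, innerSL_apply_norm, norm_neg, Real.norm_eq_abs,
      abs_of_nonneg (by positivity : (0:ℝ) ≤ 2 * s)]
  set A : E →L[ℝ] E →L[ℝ] ℝ := LinearMap.mkContinuous
    { toFun := fun y => (-(2 * s)) • innerSL ℝ y
      map_add' := by intro y z; rw [map_add, smul_add]
      map_smul' := by
        intro c y
        ext v
        simp only [ContinuousLinearMap.smul_apply, innerSL_apply_apply, RingHom.id_apply,
          smul_eq_mul, real_inner_smul_left]
        ring }
    (2 * s) hbd with hA
  have hAapp : ∀ y v : E, A y v = -(2 * s) * (inner ℝ y v : ℝ) := by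
    intro y v
    simp only [hA, LinearMap.mkContinuous_apply, LinearMap.coe_mk, AddHom.coe_mk,
      ContinuousLinearMap.smul_apply, innerSL_apply_apply, smul_eq_mul]
  have hAnorm : ‖A‖ ≤ 2 * s := by
    apply LinearMap.mkContinuous_norm_le _ (by positivity) hbd
  have hqderiv : ∀ y : E, HasFDerivAt q (A y) y := by
    intro y
    have h1 : HasFDerivAt (fun x : E => ‖x‖ ^ 2) (2 • (innerSL ℝ y)) y :=
      (hasStrictFDerivAt_norm_sq y).hasFDerivAt
    have h2 : HasFDerivAt q (-(s • (2 • (innerSL ℝ y)))) y := (h1.const_mul s).neg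
    have hAy : A y = -(s • 2 • (innerSL ℝ y)) := by
      ext v
      simp only [hAapp, ContinuousLinearMap.neg_apply, ContinuousLinearMap.smul_apply,
        innerSL_apply_apply, smul_eq_mul]
      ring
    rw [hAy]; exact h2
  have hfq : fderiv ℝ q = ⇑A := funext fun y => (hqderiv y).fderiv
  have hqsmooth : ContDiff ℝ ((m : ℕ∞) : WithTop ℕ∞) q :=
    ((contDiff_const (c := s)).mul (contDiff_norm_sq ℝ)).neg
  -- derivative bounds for q
  have hD : ∀ i : ℕ, 1 ≤ i → i ≤ m → ‖iteratedFDeriv ℝ i q η‖ ≤ (1 + 2*s*(‖η‖+1)) ^ i := by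
    intro i hi1 _
    have hDpos : (1:ℝ) ≤ 1 + 2*s*(‖η‖+1) := by nlinarith [norm_nonneg η]
    obtain ⟨j, rfl⟩ : ∃ j, i = j + 1 := ⟨i - 1, by omega⟩
    have e1 : ‖iteratedFDeriv ℝ (j+1) q η‖ = ‖iteratedFDeriv ℝ j (fderiv ℝ q) η‖ :=
      (norm_iteratedFDeriv_fderiv).symm
    rw [e1, hfq]
    match j with
    | 0 =>
      rw [norm_iteratedFDeriv_zero]
      calc ‖A η‖ ≤ ‖A‖ * ‖η‖ := A.le_opNorm η
        _ ≤ (2*s) * ‖η‖ := mul_le_mul_of_nonneg_right hAnorm (norm_nonneg _)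
        _ ≤ (1 + 2*s*(‖η‖+1)) ^ 1 := by nlinarith [norm_nonneg η]
    | j + 1 =>
      have e2 : ‖iteratedFDeriv ℝ (j+1) (⇑A) η‖ = ‖iteratedFDeriv ℝ j (fderiv ℝ (⇑A)) η‖ :=
        (norm_iteratedFDeriv_fderiv).symm
      have hfA : fderiv ℝ (⇑A) = fun _ : E => A := funext fun y => A.fderiv
      rw [e2, hfA]
      match j with
      | 0 =>
        rw [norm_iteratedFDeriv_zero]
        calc ‖A‖ ≤ 2*s := hAnorm
          _ ≤ (1 + 2*s*(‖η‖+1)) ^ 2 := by nlinarith [norm_nonneg η]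
      | j + 1 =>
        rw [iteratedFDeriv_const_of_ne (by omega : j + 1 ≠ 0)]
        simp only [Pi.zero_apply, norm_zero]
        positivity
  -- exp derivative bounds
  have hC : ∀ i : ℕ, i ≤ m → ‖iteratedFDeriv ℝ i Real.exp (q η)‖ ≤ Real.exp (-(s * ‖η‖^2)) := by
    intro i _
    rw [norm_iteratedFDeriv_eq_norm_iteratedDeriv, iteratedDeriv_eq_iterate,
      Real.iter_deriv_exp]
    rw [Real.norm_eq_abs, abs_of_pos (Real.exp_pos _)]
  have hcomp := norm_iteratedFDeriv_comp_le (g := Real.exp) (f := q) (n := m)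
    (N := ((m : ℕ∞) : WithTop ℕ∞)) Real.contDiff_exp hqsmooth le_rfl η hC hD
  exact hcomp



open FourierTransform

section AuxDecay

lemma aux_decay (n : ℕ) (φ : EuclideanSpace ℝ (Fin n) → ℝ)
    (hφ : ∀ k : ℕ, ContDiff ℝ k φ) (hφc : HasCompactSupport φ)
    (hφ0 : (0 : EuclideanSpace ℝ (Fin n)) ∉ tsupport φ) :
    ∃ c C : ℝ, 0 < c ∧ 0 ≤ C ∧ ∀ s : ℝ, 0 ≤ s → ∀ w : EuclideanSpace ℝ (Fin n),
      ‖(𝓕 (fun η => (φ η : ℂ) * ((Real.exp (-(s * ‖η‖ ^ 2)) : ℝ) : ℂ))) w‖ ≤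
        C * Real.exp (-(c * s)) * ((1 + ‖w‖) ^ (n + 1))⁻¹ := by
  classical
  -- inner radius
  obtain ⟨r, hr0, hrball⟩ : ∃ r : ℝ, 0 < r ∧ ∀ η ∈ tsupport φ, r ≤ ‖η‖ := by
    have hopen : IsOpen (tsupport φ)ᶜ := (isClosed_tsupport φ).isOpen_compl
    obtain ⟨r, hr0, hball⟩ := Metric.isOpen_iff.1 hopen 0 hφ0
    refine ⟨r, hr0, fun η hη => ?_⟩
    by_contra h
    push_neg at h
    have hmem : η ∈ Metric.ball (0 : EuclideanSpace ℝ (Fin n)) r := by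
      simpa [Metric.mem_ball, dist_zero_right] using h
    exact hball hmem hη
  -- outer radius
  obtain ⟨R₀, hR₀⟩ : ∃ R₀ : ℝ, ∀ η ∈ tsupport φ, ‖η‖ ≤ R₀ :=
    isBounded_iff_forall_norm_le.1 hφc.isBounded
  set R₂ : ℝ := max R₀ 0 with hR₂def
  have hR₂0 : 0 ≤ R₂ := le_max_right _ _
  have hR₂ : ∀ η ∈ tsupport φ, ‖η‖ ≤ R₂ := fun η hη => (hR₀ η hη).trans (le_max_left _ _)
  -- support data
  set K : Set (EuclideanSpace ℝ (Fin n)) := tsupport φ with hKdef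
  have hKmeas : MeasurableSet K := (isClosed_tsupport φ).measurableSet
  have hKfin : volume K < ⊤ := hφc.measure_lt_top
  set V : ℝ := (volume K).toReal with hVdef
  have hV0 : 0 ≤ V := ENNReal.toReal_nonneg
  -- bounds on derivatives of φ
  have hφC : ∀ i : ℕ, ∃ B : ℝ, ∀ η, ‖iteratedFDeriv ℝ i φ η‖ ≤ B := by
    intro i
    exact ((hφ i).continuous_iteratedFDeriv le_rfl).bounded_above_of_compact_support
      (hφc.iteratedFDeriv i)
  choose B hB using hφC
  set M : ℝ := 1 + ∑ i ∈ Finset.range (n + 2), max (B i) 0 with hMdef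
  have hM1 : 1 ≤ M := by
    have : (0:ℝ) ≤ ∑ i ∈ Finset.range (n + 2), max (B i) 0 :=
      Finset.sum_nonneg fun i _ => le_max_right _ _
    linarith
  have hM0 : 0 ≤ M := by linarith
  have hMb : ∀ i : ℕ, i ≤ n + 1 → ∀ η : EuclideanSpace ℝ (Fin n), ‖iteratedFDeriv ℝ i φ η‖ ≤ M := by
    intro i hi η
    have h1 : max (B i) 0 ≤ ∑ j ∈ Finset.range (n + 2), max (B j) 0 :=
      Finset.single_le_sum (f := fun j => max (B j) 0) (fun j _ => le_max_right _ _)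
        (Finset.mem_range.2 (by omega))
    have := (hB i η).trans (le_max_left (B i) 0)
    linarith
  -- ψ
  set ψ : ℝ → EuclideanSpace ℝ (Fin n) → ℂ := fun s η => (φ η : ℂ) * ((Real.exp (-(s * ‖η‖ ^ 2)) : ℝ) : ℂ) with hψdef
  have hψsmooth : ∀ s : ℝ, ContDiff ℝ ((n + 1 : ℕ) : ℕ∞) (ψ s) := by
    intro s
    apply ContDiff.mul
    · exact Complex.ofRealCLM.contDiff.comp (hφ (n + 1))
    · exact Complex.ofRealCLM.contDiff.comp
        (Real.contDiff_exp.comp ((contDiff_const.mul (contDiff_norm_sq ℝ)).neg))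
  have hψsupp : ∀ s : ℝ, HasCompactSupport (ψ s) := by
    intro s
    have h1 : HasCompactSupport (fun η : EuclideanSpace ℝ (Fin n) => (φ η : ℂ)) :=
      hφc.comp_left (g := fun x : ℝ => (x : ℂ)) Complex.ofReal_zero
    exact h1.mul_right
  -- gaussian factor bound
  have hgauss : ∀ s : ℝ, 0 ≤ s → ∀ (m : ℕ) (η : EuclideanSpace ℝ (Fin n)),
      ‖iteratedFDeriv ℝ m (fun y : EuclideanSpace ℝ (Fin n) =>
          ((Real.exp (-(s * ‖y‖ ^ 2)) : ℝ) : ℂ)) η‖ ≤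
        (m.factorial : ℝ) * Real.exp (-(s * ‖η‖ ^ 2)) * (1 + 2 * s * (‖η‖ + 1)) ^ m := by
    intro s hs m η
    have hsm : ContDiff ℝ ((m : ℕ∞) : WithTop ℕ∞)
        (fun y : EuclideanSpace ℝ (Fin n) => Real.exp (-(s * ‖y‖ ^ 2))) :=
      Real.contDiff_exp.comp ((contDiff_const.mul (contDiff_norm_sq ℝ)).neg)
    have hiso := Complex.ofRealLI.norm_iteratedFDeriv_comp_left
      (f := fun y : EuclideanSpace ℝ (Fin n) => Real.exp (-(s * ‖y‖ ^ 2))) (hsm.contDiffAt (x := η))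
      (le_refl ((m : ℕ∞) : WithTop ℕ∞))
    have heq : (fun y : EuclideanSpace ℝ (Fin n) => ((Real.exp (-(s * ‖y‖ ^ 2)) : ℝ) : ℂ)) =
        ⇑Complex.ofRealLI ∘ (fun y : EuclideanSpace ℝ (Fin n) => Real.exp (-(s * ‖y‖ ^ 2))) :=
      rfl
    rw [heq, hiso]
    exact aux_gauss_deriv m hs η
  -- φ factor bound
  have hφℂ : ∀ (i : ℕ) (η : EuclideanSpace ℝ (Fin n)),
      ‖iteratedFDeriv ℝ i (fun y : EuclideanSpace ℝ (Fin n) => ((φ y : ℝ) : ℂ)) η‖ =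
        ‖iteratedFDeriv ℝ i φ η‖ := by
    intro i η
    have hiso := Complex.ofRealLI.norm_iteratedFDeriv_comp_left (f := φ)
      (((hφ i) : ContDiff ℝ ((i : ℕ∞) : WithTop ℕ∞) φ).contDiffAt (x := η)) (le_refl ((i : ℕ∞) : WithTop ℕ∞))
    exact hiso
  -- product bound on K
  set D2 : ℝ := (1 + 2 * (R₂ + 1)) ^ (n + 1) with hD2def
  have hD21 : (1:ℝ) ≤ D2 := one_le_pow₀ (by nlinarith)
  set C₁ : ℝ := (n + 2 : ℝ) * (2 ^ (n + 1) * (((n + 1).factorial : ℝ) * (M * D2))) with hC₁def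
  have hC₁0 : 0 ≤ C₁ := by positivity
  have hC₁b : ∀ s : ℝ, 0 ≤ s → ∀ j : ℕ, j ≤ n + 1 → ∀ η ∈ K,
      ‖iteratedFDeriv ℝ j (ψ s) η‖ ≤ C₁ * ((1 + s) ^ (n + 1) * Real.exp (-(s * ‖η‖ ^ 2))) := by
    intro s hs j hj η hη
    have hmul := norm_iteratedFDeriv_mul_le (𝕜 := ℝ) (A := ℂ)
      (f := fun y : EuclideanSpace ℝ (Fin n) => ((φ y : ℝ) : ℂ))
      (g := fun y : EuclideanSpace ℝ (Fin n) => ((Real.exp (-(s * ‖y‖ ^ 2)) : ℝ) : ℂ))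
      (N := ((n + 1 : ℕ) : ℕ∞))
      (Complex.ofRealCLM.contDiff.comp (hφ (n + 1)))
      (Complex.ofRealCLM.contDiff.comp
        (Real.contDiff_exp.comp ((contDiff_const.mul (contDiff_norm_sq ℝ)).neg)))
      η (by exact_mod_cast hj)
    have hterm : ∀ i ∈ Finset.range (j + 1),
        (j.choose i : ℝ) *
            ‖iteratedFDeriv ℝ i (fun y : EuclideanSpace ℝ (Fin n) => ((φ y : ℝ) : ℂ)) η‖ *
            ‖iteratedFDeriv ℝ (j - i)
              (fun y : EuclideanSpace ℝ (Fin n) => ((Real.exp (-(s * ‖y‖ ^ 2)) : ℝ) : ℂ)) η‖ ≤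
          2 ^ (n + 1) * (((n + 1).factorial : ℝ) * (M * D2)) *
            ((1 + s) ^ (n + 1) * Real.exp (-(s * ‖η‖ ^ 2))) := by
      intro i hi
      rw [Finset.mem_range] at hi
      have hi' : i ≤ j := by omega
      have h1 : (j.choose i : ℝ) ≤ 2 ^ (n + 1) := by
        have h2 : j.choose i ≤ 2 ^ j := by
          have := Nat.sum_range_choose j
          have h3 : j.choose i ≤ ∑ k ∈ Finset.range (j + 1), j.choose k :=
            Finset.single_le_sum (f := fun k => j.choose k) (fun k _ => Nat.zero_le _)
              (Finset.mem_range.2 (by omega))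
          omega
        have h4 : (2:ℝ) ^ j ≤ 2 ^ (n + 1) := by
          apply pow_le_pow_right₀ (by norm_num) hj
        calc (j.choose i : ℝ) ≤ (2 ^ j : ℕ) := by exact_mod_cast h2
          _ = (2:ℝ) ^ j := by push_cast; ring
          _ ≤ 2 ^ (n + 1) := h4
      have h5 : ‖iteratedFDeriv ℝ i (fun y : EuclideanSpace ℝ (Fin n) => ((φ y : ℝ) : ℂ)) η‖ ≤ M := by
        rw [hφℂ]; exact hMb i (by omega) η
      have h6 : ‖iteratedFDeriv ℝ (j - i)
          (fun y : EuclideanSpace ℝ (Fin n) => ((Real.exp (-(s * ‖y‖ ^ 2)) : ℝ) : ℂ)) η‖ ≤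
          ((n + 1).factorial : ℝ) * Real.exp (-(s * ‖η‖ ^ 2)) * (D2 * (1 + s) ^ (n + 1)) := by
        refine (hgauss s hs (j - i) η).trans ?_
        have hfact : ((j - i).factorial : ℝ) ≤ ((n + 1).factorial : ℝ) := by
          exact_mod_cast Nat.factorial_le (by omega)
        have hbase0 : (0:ℝ) ≤ 1 + 2 * s * (‖η‖ + 1) := by nlinarith [norm_nonneg η]
        have hpow : (1 + 2 * s * (‖η‖ + 1)) ^ (j - i) ≤ D2 * (1 + s) ^ (n + 1) := by
          have hb1 : (1:ℝ) + 2 * s * (‖η‖ + 1) ≤ (1 + 2 * (R₂ + 1)) * (1 + s) := by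
            have hηR : ‖η‖ ≤ R₂ := hR₂ η hη
            nlinarith [norm_nonneg η]
          have hb2 : (1 + 2 * s * (‖η‖ + 1)) ^ (j - i) ≤
              ((1 + 2 * (R₂ + 1)) * (1 + s)) ^ (j - i) :=
            pow_le_pow_left₀ hbase0 hb1 _
          have hb3 : ((1 + 2 * (R₂ + 1)) * (1 + s)) ^ (j - i) ≤
              ((1 + 2 * (R₂ + 1)) * (1 + s)) ^ (n + 1) := by
            apply pow_le_pow_right₀ _ (by omega)
            nlinarith
          calc (1 + 2 * s * (‖η‖ + 1)) ^ (j - i) ≤ ((1 + 2 * (R₂ + 1)) * (1 + s)) ^ (n + 1) :=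
                hb2.trans hb3
            _ = D2 * (1 + s) ^ (n + 1) := by rw [hD2def, mul_pow]
        have he0 : (0:ℝ) < Real.exp (-(s * ‖η‖ ^ 2)) := Real.exp_pos _
        exact mul_le_mul (mul_le_mul_of_nonneg_right hfact he0.le) hpow
          (pow_nonneg hbase0 _) (by positivity)
      have hn1 : (0:ℝ) ≤ ‖iteratedFDeriv ℝ i (fun y : EuclideanSpace ℝ (Fin n) => ((φ y : ℝ) : ℂ)) η‖ :=
        norm_nonneg _
      have he0 : (0:ℝ) < Real.exp (-(s * ‖η‖ ^ 2)) := Real.exp_pos _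
      have hstep : (j.choose i : ℝ) *
            ‖iteratedFDeriv ℝ i (fun y : EuclideanSpace ℝ (Fin n) => ((φ y : ℝ) : ℂ)) η‖ *
            ‖iteratedFDeriv ℝ (j - i)
              (fun y : EuclideanSpace ℝ (Fin n) => ((Real.exp (-(s * ‖y‖ ^ 2)) : ℝ) : ℂ)) η‖ ≤
          (2 ^ (n + 1) * M) *
              (((n + 1).factorial : ℝ) * Real.exp (-(s * ‖η‖ ^ 2)) * (D2 * (1 + s) ^ (n + 1))) :=
        mul_le_mul (mul_le_mul h1 h5 hn1 (by positivity)) h6 (norm_nonneg _) (by positivity)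
      refine hstep.trans (le_of_eq ?_)
      ring
    refine hmul.trans ?_
    refine (Finset.sum_le_card_nsmul _ _ _ hterm).trans ?_
    rw [Finset.card_range, nsmul_eq_mul]
    have hcard : ((j + 1 : ℕ) : ℝ) ≤ (n + 2 : ℝ) := by
      have : j + 1 ≤ n + 2 := by omega
      exact_mod_cast this
    have hpos : (0:ℝ) ≤ 2 ^ (n + 1) * (((n + 1).factorial : ℝ) * (M * D2)) *
        ((1 + s) ^ (n + 1) * Real.exp (-(s * ‖η‖ ^ 2))) := by positivity
    calc ((j + 1 : ℕ) : ℝ) * (2 ^ (n + 1) * (((n + 1).factorial : ℝ) * (M * D2)) *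
          ((1 + s) ^ (n + 1) * Real.exp (-(s * ‖η‖ ^ 2))))
        ≤ (n + 2 : ℝ) * (2 ^ (n + 1) * (((n + 1).factorial : ℝ) * (M * D2)) *
          ((1 + s) ^ (n + 1) * Real.exp (-(s * ‖η‖ ^ 2)))) :=
          mul_le_mul_of_nonneg_right hcard hpos
      _ = C₁ * ((1 + s) ^ (n + 1) * Real.exp (-(s * ‖η‖ ^ 2))) := by rw [hC₁def]; ring
  -- integral bound on derivatives
  obtain ⟨Cp, hCp0, hCp⟩ := aux_poly_exp (n + 1) (show (0:ℝ) < r ^ 2 / 2 by positivity)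
  set c : ℝ := r ^ 2 / 2 with hcdef
  have hc0 : 0 < c := by rw [hcdef]; positivity
  have hIntcont : ∀ (s : ℝ) (j : ℕ), Continuous (iteratedFDeriv ℝ j (ψ s)) := by
    intro s j
    have hsm : ContDiff ℝ ((j : ℕ∞) : WithTop ℕ∞) (ψ s) := by
      apply ContDiff.mul
      · exact Complex.ofRealCLM.contDiff.comp (hφ j)
      · exact Complex.ofRealCLM.contDiff.comp
          (Real.contDiff_exp.comp ((contDiff_const.mul (contDiff_norm_sq ℝ)).neg))
    exact hsm.continuous_iteratedFDeriv le_rfl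
  have hIntble : ∀ (s : ℝ) (j : ℕ),
      Integrable (fun η => ‖iteratedFDeriv ℝ j (ψ s) η‖) := by
    intro s j
    exact ((hIntcont s j).norm).integrable_of_hasCompactSupport
      (((hψsupp s).iteratedFDeriv j).norm)
  have hzero : ∀ (s : ℝ) (j : ℕ) (η : EuclideanSpace ℝ (Fin n)), η ∉ K →
      iteratedFDeriv ℝ j (ψ s) η = 0 := by
    intro s j η hη
    apply image_eq_zero_of_notMem_tsupport
    intro hmem
    apply hη
    have h1 : tsupport (iteratedFDeriv ℝ j (ψ s)) ⊆ tsupport (ψ s) :=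
      tsupport_iteratedFDeriv_subset j
    have h2 : tsupport (ψ s) ⊆ K := by
      apply closure_minimal _ (isClosed_tsupport φ)
      intro y hy
      simp only [hψdef, Function.mem_support] at hy
      by_contra hyK
      have : φ y = 0 := image_eq_zero_of_notMem_tsupport hyK
      simp [this] at hy
    exact h2 (h1 hmem)
  set C₃ : ℝ := C₁ * Cp * V with hC₃def
  have hC₃0 : 0 ≤ C₃ := by positivity
  have hInt : ∀ s : ℝ, 0 ≤ s → ∀ j : ℕ, j ≤ n + 1 →
      (∫ η, ‖iteratedFDeriv ℝ j (ψ s) η‖) ≤ C₃ * Real.exp (-(c * s)) := by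
    intro s hs j hj
    have hptwise : ∀ η : EuclideanSpace ℝ (Fin n), ‖iteratedFDeriv ℝ j (ψ s) η‖ ≤
        K.indicator (fun _ => C₁ * Cp * Real.exp (-(c * s))) η := by
      intro η
      by_cases hη : η ∈ K
      · rw [Set.indicator_of_mem hη]
        refine (hC₁b s hs j hj η hη).trans ?_
        have hr2 : r ^ 2 ≤ ‖η‖ ^ 2 := by
          have := hrball η hη
          nlinarith [norm_nonneg η]
        have hexp : Real.exp (-(s * ‖η‖ ^ 2)) ≤ Real.exp (-(c * s)) * Real.exp (-(c * s)) := by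
          rw [← Real.exp_add]
          apply Real.exp_le_exp.2
          rw [hcdef]
          nlinarith [mul_le_mul_of_nonneg_left hr2 hs]
        have hCps := hCp s hs
        calc C₁ * ((1 + s) ^ (n + 1) * Real.exp (-(s * ‖η‖ ^ 2)))
            ≤ C₁ * ((1 + s) ^ (n + 1) * (Real.exp (-(c * s)) * Real.exp (-(c * s)))) := by
              apply mul_le_mul_of_nonneg_left _ hC₁0
              exact mul_le_mul_of_nonneg_left hexp (by positivity)
          _ = C₁ * ((1 + s) ^ (n + 1) * Real.exp (-(c * s))) * Real.exp (-(c * s)) := by ring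
          _ ≤ C₁ * Cp * Real.exp (-(c * s)) := by
              apply mul_le_mul_of_nonneg_right _ (Real.exp_pos _).le
              exact mul_le_mul_of_nonneg_left (by rw [hcdef] at *; exact hCps) hC₁0
      · rw [Set.indicator_of_notMem hη, hzero s j η hη]
        simp
    have hindint : Integrable (K.indicator (fun _ => C₁ * Cp * Real.exp (-(c * s)))) := by
      rw [integrable_indicator_iff hKmeas]
      exact integrableOn_const hKfin.ne
    calc (∫ η, ‖iteratedFDeriv ℝ j (ψ s) η‖)
        ≤ ∫ η, K.indicator (fun _ => C₁ * Cp * Real.exp (-(c * s))) η :=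
          integral_mono (hIntble s j) hindint hptwise
      _ = (volume K).toReal • (C₁ * Cp * Real.exp (-(c * s))) := by
          rw [integral_indicator_const _ hKmeas]; rfl
      _ = C₃ * Real.exp (-(c * s)) := by rw [hC₃def, smul_eq_mul, ← hVdef]; ring
  -- Fourier decay bound
  set C₆ : ℝ := 2 ^ (n + 1) * ((n + 2 : ℝ) * C₃) with hC₆def
  have hC₆0 : 0 ≤ C₆ := by positivity
  have hFourier : ∀ s : ℝ, 0 ≤ s → ∀ m : ℕ, m ≤ n + 1 → ∀ w : EuclideanSpace ℝ (Fin n),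
      ‖w‖ ^ m * ‖𝓕 (ψ s) w‖ ≤ C₆ * Real.exp (-(c * s)) := by
    intro s hs m hm w
    have h'f : ∀ (k j : ℕ), (k : ℕ∞) ≤ (0 : ℕ∞) → (j : ℕ∞) ≤ ((n + 1 : ℕ) : ℕ∞) →
        Integrable (fun v : EuclideanSpace ℝ (Fin n) =>
          ‖v‖ ^ k * ‖iteratedFDeriv ℝ j (ψ s) v‖) := by
      intro k j _ _
      apply Continuous.integrable_of_hasCompactSupport
      · exact (continuous_norm.pow k).mul (hIntcont s j).norm
      · exact (((hψsupp s).iteratedFDeriv j).norm).mul_left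
    have hmain := Real.pow_mul_norm_iteratedFDeriv_fourier_le
      (f := ψ s) (K := (0 : ℕ∞)) (N := ((n + 1 : ℕ) : ℕ∞))
      (hψsmooth s) h'f (k := 0) (n := m) le_rfl (by exact_mod_cast hm) w
    rw [norm_iteratedFDeriv_zero] at hmain
    have hsum : (∑ p ∈ Finset.range (0 + 1) ×ˢ Finset.range (m + 1),
        ∫ v, ‖v‖ ^ p.1 * ‖iteratedFDeriv ℝ p.2 (ψ s) v‖) ≤
        ((m + 1 : ℕ) : ℝ) * (C₃ * Real.exp (-(c * s))) := by
      have hterm : ∀ p ∈ Finset.range (0 + 1) ×ˢ Finset.range (m + 1),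
          (∫ v, ‖v‖ ^ p.1 * ‖iteratedFDeriv ℝ p.2 (ψ s) v‖) ≤ C₃ * Real.exp (-(c * s)) := by
        intro p hp
        simp only [Finset.mem_product, Finset.mem_range] at hp
        obtain ⟨hp1, hp2⟩ := hp
        have hp1' : p.1 = 0 := by omega
        rw [hp1']
        simp only [pow_zero, one_mul]
        exact hInt s hs p.2 (by omega)
      refine (Finset.sum_le_card_nsmul _ _ _ hterm).trans ?_
      rw [Finset.card_product, Finset.card_range, Finset.card_range, nsmul_eq_mul]
      apply le_of_eq
      push_cast
      ring
    have h2m : (2:ℝ) ^ m ≤ 2 ^ (n + 1) := pow_le_pow_right₀ (by norm_num) hm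
    have hm1 : ((m + 1 : ℕ) : ℝ) ≤ (n + 2 : ℝ) := by
      push_cast
      have : (m:ℝ) ≤ (n:ℝ) + 1 := by exact_mod_cast hm
      linarith
    calc ‖w‖ ^ m * ‖𝓕 (ψ s) w‖
        ≤ (2 * Real.pi) ^ 0 * (2 * ((0:ℕ):ℝ) + 2) ^ m *
          ∑ p ∈ Finset.range (0 + 1) ×ˢ Finset.range (m + 1),
            ∫ v, ‖v‖ ^ p.1 * ‖iteratedFDeriv ℝ p.2 (ψ s) v‖ := hmain
      _ = 2 ^ m * ∑ p ∈ Finset.range (0 + 1) ×ˢ Finset.range (m + 1),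
            ∫ v, ‖v‖ ^ p.1 * ‖iteratedFDeriv ℝ p.2 (ψ s) v‖ := by norm_num
      _ ≤ 2 ^ m * (((m + 1 : ℕ) : ℝ) * (C₃ * Real.exp (-(c * s)))) := by
          apply mul_le_mul_of_nonneg_left hsum (by positivity)
      _ ≤ 2 ^ (n + 1) * ((n + 2 : ℝ) * (C₃ * Real.exp (-(c * s)))) := by
          apply mul_le_mul h2m _ (by positivity) (by positivity)
          exact mul_le_mul_of_nonneg_right hm1 (by positivity)
      _ = C₆ * Real.exp (-(c * s)) := by rw [hC₆def]; ring
  -- conclude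
  refine ⟨c, 2 ^ (n + 2) * C₆, hc0, by positivity, fun s hs w => ?_⟩
  have hψeq : (fun η : EuclideanSpace ℝ (Fin n) =>
      (φ η : ℂ) * ((Real.exp (-(s * ‖η‖ ^ 2)) : ℝ) : ℂ)) = ψ s := rfl
  rw [hψeq]
  have hXpos : (0:ℝ) < (1 + ‖w‖) ^ (n + 1) := by positivity
  have hPt : ‖𝓕 (ψ s) w‖ * (1 + ‖w‖) ^ (n + 1) ≤ 2 ^ (n + 2) * C₆ * Real.exp (-(c * s)) := by
    have h0 := hFourier s hs 0 (by omega) w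
    rw [pow_zero, one_mul] at h0
    have hn1 := hFourier s hs (n + 1) le_rfl w
    have hexp : (1 + ‖w‖) ^ (n + 1) ≤ 2 ^ (n + 1) * (1 + ‖w‖ ^ (n + 1)) :=
      aux_one_add_pow (norm_nonneg w) (n + 1)
    have hmulnn : (0:ℝ) ≤ ‖𝓕 (ψ s) w‖ := norm_nonneg _
    calc ‖𝓕 (ψ s) w‖ * (1 + ‖w‖) ^ (n + 1)
        ≤ ‖𝓕 (ψ s) w‖ * (2 ^ (n + 1) * (1 + ‖w‖ ^ (n + 1))) :=
          mul_le_mul_of_nonneg_left hexp hmulnn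
      _ = 2 ^ (n + 1) * (‖𝓕 (ψ s) w‖ + ‖w‖ ^ (n + 1) * ‖𝓕 (ψ s) w‖) := by ring
      _ ≤ 2 ^ (n + 1) * (C₆ * Real.exp (-(c * s)) + C₆ * Real.exp (-(c * s))) := by
          apply mul_le_mul_of_nonneg_left _ (by positivity)
          exact add_le_add h0 hn1
      _ = 2 ^ (n + 2) * C₆ * Real.exp (-(c * s)) := by ring
  have := (le_div_iff₀ hXpos).2 hPt
  rwa [div_eq_mul_inv] at this

end AuxDecay

/-- The frequency-localized heat kernel
`G_{λ,t}(x) = ∫ e^{2πi x·ξ} φ(ξ/λ) e^{-t|ξ|²} dξ`. -/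
noncomputable def heatLoc (n : ℕ) (φ : EuclideanSpace ℝ (Fin n) → ℝ) (lam t : ℝ)
    (x : EuclideanSpace ℝ (Fin n)) : ℂ :=
  ∫ ξ : EuclideanSpace ℝ (Fin n),
    Complex.exp (2 * Real.pi * Complex.I * ((inner ℝ x ξ : ℝ) : ℂ)) *
      (φ (lam⁻¹ • ξ) : ℂ) * Complex.exp (-((t * ‖ξ‖ ^ 2 : ℝ) : ℂ))

/-- L¹ decay of frequency-localized heat kernels (key estimate in the proof of Lemma 3.5). -/
theorem heat_localized_L1 (n : ℕ) (hn : 1 ≤ n) (φ : EuclideanSpace ℝ (Fin n) → ℝ)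
    (hφ : ∀ k : ℕ, ContDiff ℝ k φ) (hφc : HasCompactSupport φ)
    (hφ0 : (0 : EuclideanSpace ℝ (Fin n)) ∉ tsupport φ) :
    ∃ c C : ℝ, 0 < c ∧ 0 < C ∧ ∀ t lam : ℝ, 0 < t → 0 < lam →
      (∫⁻ x, (‖heatLoc n φ lam t x‖₊ : ℝ≥0∞)) ≤
        ENNReal.ofReal (C * Real.exp (-c * t * lam ^ 2)) := by
  classical
  obtain ⟨c, C₀, hc0, hC₀0, hdec⟩ := aux_decay n φ hφ hφc hφ0
  set g₀ : EuclideanSpace ℝ (Fin n) → ℝ := fun y => ((1 + ‖y‖) ^ (n + 1))⁻¹ with hg₀def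
  have hg₀int : Integrable g₀ := by
    have h1 := integrable_one_add_norm (E := EuclideanSpace ℝ (Fin n))
      (μ := (volume : Measure (EuclideanSpace ℝ (Fin n)))) (r := ((n + 1 : ℕ) : ℝ))
      (by rw [finrank_euclideanSpace_fin]; push_cast; linarith)
    have h2 : (fun x : EuclideanSpace ℝ (Fin n) => (1 + ‖x‖) ^ (-((n + 1 : ℕ) : ℝ))) = g₀ := by
      funext x
      rw [hg₀def, Real.rpow_neg (by positivity), Real.rpow_natCast]
    rwa [h2] at h1
  set I₀ : ℝ := ∫ y, g₀ y with hI₀def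
  have hI₀0 : 0 ≤ I₀ := integral_nonneg fun y => by positivity
  refine ⟨c, C₀ * I₀ + 1, hc0, by positivity, fun t lam ht hlam => ?_⟩
  set s : ℝ := t * lam ^ 2 with hsdef
  have hs0 : 0 ≤ s := by positivity
  have hdec' := hdec s hs0
  set ψ : EuclideanSpace ℝ (Fin n) → ℂ :=
    fun η => (φ η : ℂ) * ((Real.exp (-(s * ‖η‖ ^ 2)) : ℝ) : ℂ) with hψdef
  -- the scaling identity
  have hid : ∀ x : EuclideanSpace ℝ (Fin n),
      heatLoc n φ lam t x = (lam ^ n : ℝ) • 𝓕 ψ (-(lam • x)) := by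
    intro x
    set F : EuclideanSpace ℝ (Fin n) → ℂ := fun ξ =>
      Complex.exp (2 * Real.pi * Complex.I * ((inner ℝ x ξ : ℝ) : ℂ)) *
        (φ (lam⁻¹ • ξ) : ℂ) * Complex.exp (-((t * ‖ξ‖ ^ 2 : ℝ) : ℂ)) with hFdef
    have hcomp := MeasureTheory.Measure.integral_comp_smul (μ := volume) F lam
    rw [finrank_euclideanSpace_fin, abs_of_pos (by positivity : (0:ℝ) < (lam ^ n)⁻¹)] at hcomp
    have hFint : heatLoc n φ lam t x = ∫ ξ, F ξ := rfl
    have hmain : (lam ^ n : ℝ) • ∫ η, F (lam • η) = ∫ ξ, F ξ := by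
      rw [hcomp, smul_smul, mul_inv_cancel₀ (by positivity : (lam:ℝ) ^ n ≠ 0), one_smul]
    have hFT : 𝓕 ψ (-(lam • x)) = ∫ η, F (lam • η) := by
      rw [Real.fourier_eq']
      refine integral_congr_ae (Filter.Eventually.of_forall fun η => ?_)
      have h1 : lam⁻¹ • (lam • η) = η := by
        rw [smul_smul, inv_mul_cancel₀ (ne_of_gt hlam), one_smul]
      have h2 : (t * ‖lam • η‖ ^ 2 : ℝ) = s * ‖η‖ ^ 2 := by
        rw [norm_smul, Real.norm_eq_abs, mul_pow, sq_abs, hsdef]; ring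
      have h3 : (inner ℝ x (lam • η) : ℝ) = lam * (inner ℝ x η : ℝ) :=
        real_inner_smul_right x η lam
      have h4 : (inner ℝ η (-(lam • x)) : ℝ) = -(lam * (inner ℝ x η : ℝ)) := by
        rw [inner_neg_right, real_inner_smul_right, real_inner_comm]
      show Complex.exp (((-2 * Real.pi * (inner ℝ η (-(lam • x)) : ℝ) : ℝ) : ℂ) * Complex.I) • ψ η
          = F (lam • η)
      rw [hFdef, hψdef]
      simp only [h1, h2, h3, h4, smul_eq_mul]
      rw [show (((-2 * Real.pi * -(lam * (inner ℝ x η : ℝ)) : ℝ)) : ℂ) * Complex.I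
          = 2 * Real.pi * Complex.I * ((lam * (inner ℝ x η : ℝ) : ℝ) : ℂ) by push_cast; ring]
      push_cast [Complex.ofReal_exp]
      ring
    rw [hFint, ← hmain, hFT]
  -- pointwise bound
  have hptb : ∀ x : EuclideanSpace ℝ (Fin n), ‖heatLoc n φ lam t x‖ ≤
      lam ^ n * (C₀ * Real.exp (-(c * s))) * g₀ (lam • x) := by
    intro x
    rw [hid x, norm_smul, Real.norm_eq_abs, abs_of_pos (pow_pos hlam n)]
    have hb := hdec' (-(lam • x))
    rw [norm_neg] at hb
    calc lam ^ n * ‖𝓕 ψ (-(lam • x))‖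
        ≤ lam ^ n * (C₀ * Real.exp (-(c * s)) * ((1 + ‖lam • x‖) ^ (n + 1))⁻¹) :=
          mul_le_mul_of_nonneg_left hb (by positivity)
      _ = lam ^ n * (C₀ * Real.exp (-(c * s))) * g₀ (lam • x) := by
          rw [hg₀def]; ring
  -- integrability of the bound
  have hgl : Integrable (fun x : EuclideanSpace ℝ (Fin n) => g₀ (lam • x)) := by
    exact (MeasureTheory.integrable_comp_smul_iff
      (volume : Measure (EuclideanSpace ℝ (Fin n))) g₀ (ne_of_gt hlam)).2 hg₀int
  have hbint : Integrable (fun x : EuclideanSpace ℝ (Fin n) =>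
      lam ^ n * (C₀ * Real.exp (-(c * s))) * g₀ (lam • x)) := hgl.const_mul _
  -- final computation
  calc (∫⁻ x, (‖heatLoc n φ lam t x‖₊ : ℝ≥0∞))
      ≤ ∫⁻ x, ENNReal.ofReal (lam ^ n * (C₀ * Real.exp (-(c * s))) * g₀ (lam • x)) := by
        apply lintegral_mono
        intro x
        exact le_trans (le_of_eq (ENNReal.ofReal_eq_coe_nnreal (norm_nonneg _)).symm)
          (ENNReal.ofReal_le_ofReal (hptb x))
    _ = ENNReal.ofReal (∫ x, lam ^ n * (C₀ * Real.exp (-(c * s))) * g₀ (lam • x)) := by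
        refine (ofReal_integral_eq_lintegral_ofReal hbint ?_).symm
        refine Filter.Eventually.of_forall fun x => ?_
        have : (0:ℝ) ≤ g₀ (lam • x) := by rw [hg₀def]; positivity
        positivity
    _ ≤ ENNReal.ofReal ((C₀ * I₀ + 1) * Real.exp (-c * t * lam ^ 2)) := by
        apply ENNReal.ofReal_le_ofReal
        have hint : (∫ x, lam ^ n * (C₀ * Real.exp (-(c * s))) * g₀ (lam • x))
            = lam ^ n * (C₀ * Real.exp (-(c * s))) * ((lam ^ n)⁻¹ * I₀) := by
          rw [integral_const_mul]
          congr 1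
          have hcg := MeasureTheory.Measure.integral_comp_smul (μ := volume) g₀ lam
          rw [finrank_euclideanSpace_fin,
            abs_of_pos (by positivity : (0:ℝ) < (lam ^ n)⁻¹), smul_eq_mul] at hcg
          rw [hcg, hI₀def]
        rw [hint]
        have hexpeq : Real.exp (-(c * s)) = Real.exp (-c * t * lam ^ 2) := by
          rw [hsdef]; ring_nf
        rw [show lam ^ n * (C₀ * Real.exp (-(c * s))) * ((lam ^ n)⁻¹ * I₀)
            = (lam ^ n * (lam ^ n)⁻¹) * (C₀ * I₀ * Real.exp (-(c * s))) by ring,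
          mul_inv_cancel₀ (by positivity : (lam:ℝ) ^ n ≠ 0), one_mul, hexpeq]
        apply mul_le_mul_of_nonneg_right _ (Real.exp_pos _).le
        linarith
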